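/- Let p ≥ 3 be an integer. Let m, s, n be natural numbers with 0 ≤ m < n and 0 ≤ s < n, let j be an integer, and let E be a real number with 1 < E. If |j| > p^{E·n} (real exponentiation), then the word length of t^{−m} a^{j} t^{s} in BS(1,p) satisfies l(t^{−m} a^{j} t^{s}) > (E − 1)·n. -/

import Mathlib

/-- The single relator `t a t⁻¹ a^{-p}` of the Baumslag–Solitar group `BS(1,p)`,
where `a` is the image of `0 : Fin 2` and `t` is the image of `1 : Fin 2`. -/
def BSRel (p : ℤ) : Set (FreeGroup (Fin 2)) :=
  {FreeGroup.of 1 * FreeGroup.of 0 * (FreeGroup.of 1)⁻¹ * (FreeGroup.of 0) ^ (-p)}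

/-- The Baumslag–Solitar group `BS(1,p) = ⟨a, t ∣ t a t⁻¹ = a^p⟩`. -/
abbrev BS (p : ℤ) : Type := PresentedGroup (BSRel p)

/-- The generator `a` of `BS(1,p)`. -/
def BSa (p : ℤ) : BS p := PresentedGroup.of 0

/-- The generator `t` of `BS(1,p)`. -/
def BSt (p : ℤ) : BS p := PresentedGroup.of 1

/-- The word length of `g ∈ BS(1,p)` with respect to the generating set
`{a, a⁻¹, t, t⁻¹}`: the least `n` such that `g` is a product of `n` generators. -/
noncomputable def BSlength (p : ℤ) (g : BS p) : ℕ :=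
  sInf {n : ℕ | ∃ w : List (BS p), w.length = n ∧
    (∀ x ∈ w, x = BSa p ∨ x = (BSa p)⁻¹ ∨ x = BSt p ∨ x = (BSt p)⁻¹) ∧ w.prod = g}

def Arep : Multiplicative ℝ →* Equiv.Perm ℝ where
  toFun r := Equiv.addRight r.toAdd
  map_one' := by ext x; simp
  map_mul' a b := by ext x; simp [Equiv.Perm.mul_apply]; ring

lemma Arep_apply (r x : ℝ) : Arep (Multiplicative.ofAdd r) x = x + r := rfl

noncomputable def Trep : ℝˣ →* Equiv.Perm ℝ := MulAction.toPermHom ℝˣ ℝ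

lemma Trep_apply (u : ℝˣ) (x : ℝ) : Trep u x = (u : ℝ) * x := rfl

lemma BS_rel_holds (p : ℤ) (hp0 : (p : ℝ) ≠ 0) :
    ∀ r ∈ BSRel p,
      FreeGroup.lift ![Arep (Multiplicative.ofAdd 1), Trep (Units.mk0 (p : ℝ) hp0)] r = 1 := by
  intro r hr
  rw [BSRel, Set.mem_singleton_iff] at hr
  subst hr
  set f : Fin 2 → Equiv.Perm ℝ := ![Arep (Multiplicative.ofAdd 1), Trep (Units.mk0 (p : ℝ) hp0)]
  have h0 : f 0 = Arep (Multiplicative.ofAdd 1) := rfl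
  have h1 : f 1 = Trep (Units.mk0 (p : ℝ) hp0) := rfl
  simp only [map_mul, map_inv, map_zpow, FreeGroup.lift_apply_of, h0, h1]
  rw [← map_zpow Arep, ← ofAdd_zsmul, ← map_inv Trep]
  ext x
  simp only [Equiv.Perm.mul_apply, Arep_apply, Trep_apply, Equiv.Perm.one_apply,
    Units.val_inv_eq_inv_val, Units.val_mk0, smul_eq_mul, zsmul_eq_mul, Int.cast_neg, mul_one]
  field_simp
  ring

lemma BS_word_bound (p : ℤ) (hp : 3 ≤ p) (hp0 : (p : ℝ) ≠ 0)
    (φ : BS p →* Equiv.Perm ℝ)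
    (hφa : φ (BSa p) = Arep (Multiplicative.ofAdd 1))
    (hφt : φ (BSt p) = Trep (Units.mk0 (p : ℝ) hp0)) :
    ∀ w : List (BS p),
      (∀ x ∈ w, x = BSa p ∨ x = (BSa p)⁻¹ ∨ x = BSt p ∨ x = (BSt p)⁻¹) →
      |φ w.prod 0| ≤ (p : ℝ) ^ w.length := by
  have hp3 : (3 : ℝ) ≤ (p : ℝ) := by exact_mod_cast hp
  intro w
  induction w with
  | nil => intro _; simp
  | cons g w ih =>
    intro hg
    have hc := ih (fun x hx => hg x (List.mem_cons_of_mem _ hx))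
    set c := φ w.prod 0 with hcdef
    have hpos : (0:ℝ) < (p:ℝ) ^ w.length := by positivity
    have hone : (1:ℝ) ≤ (p:ℝ) ^ w.length := one_le_pow₀ (by linarith)
    have key : |φ (g :: w).prod 0| = |φ g c| := by
      rw [List.prod_cons, map_mul, Equiv.Perm.mul_apply]
    rw [key, List.length_cons, pow_succ]
    rcases hg g List.mem_cons_self with h | h | h | h
    · rw [h, hφa, Arep_apply]
      calc |c + 1| ≤ |c| + |(1:ℝ)| := abs_add_le _ _
        _ = |c| + 1 := by rw [abs_one]
        _ ≤ (p:ℝ) ^ w.length + 1 := by linarith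
        _ ≤ (p:ℝ) ^ w.length * (p:ℝ) := by nlinarith
    · rw [h, map_inv, hφa, ← map_inv Arep, ← ofAdd_neg, Arep_apply]
      calc |c + (-1)| ≤ |c| + |(-1 : ℝ)| := abs_add_le _ _
        _ ≤ (p:ℝ) ^ w.length + 1 := by rw [abs_neg, abs_one]; linarith
        _ ≤ (p:ℝ) ^ w.length * (p:ℝ) := by nlinarith
    · rw [h, hφt, Trep_apply, Units.val_mk0, abs_mul, abs_of_pos (by linarith)]
      calc (p:ℝ) * |c| ≤ (p:ℝ) * ((p:ℝ) ^ w.length) := by nlinarith [abs_nonneg c]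
        _ = (p:ℝ) ^ w.length * (p:ℝ) := by ring
    · rw [h, map_inv, hφt, ← map_inv Trep, Trep_apply, Units.val_inv_eq_inv_val, Units.val_mk0,
        abs_mul, abs_inv, abs_of_pos (by linarith : (0:ℝ) < (p:ℝ))]
      have h1 : (p:ℝ)⁻¹ ≤ 1 := by
        rw [inv_le_one_iff₀]; right; linarith
      nlinarith [abs_nonneg c]

/-- If `0 ≤ m < n`, `0 ≤ s < n`, `1 < E`, and `|j| > p^{E·n}`, then the word length of
`t^{-m} a^j t^s` in `BS(1,p)` (for `p ≥ 3`) exceeds `(E - 1)·n`. -/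
theorem BS_exponent_implies_length_lower_bound (p : ℤ) (hp : 3 ≤ p)
    (m s n : ℕ) (j : ℤ) (E : ℝ) (hm : m < n) (hs : s < n) (hE : 1 < E)
    (hj : (p : ℝ) ^ (E * (n : ℝ)) < |(j : ℝ)|) :
    (E - 1) * (n : ℝ) <
      (BSlength p ((BSt p) ^ (-(m : ℤ)) * (BSa p) ^ j * (BSt p) ^ (s : ℤ)) : ℝ) := by
  have hp3 : (3 : ℝ) ≤ (p : ℝ) := by exact_mod_cast hp
  have hp1 : (1 : ℝ) < (p : ℝ) := by linarith
  have hp0 : (p : ℝ) ≠ 0 := by linarith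
  set g : BS p := (BSt p) ^ (-(m : ℤ)) * (BSa p) ^ j * (BSt p) ^ (s : ℤ) with hgdef
  set φ : BS p →* Equiv.Perm ℝ := PresentedGroup.toGroup (BS_rel_holds p hp0) with hφdef
  have hφa : φ (BSa p) = Arep (Multiplicative.ofAdd 1) := PresentedGroup.toGroup.of _
  have hφt : φ (BSt p) = Trep (Units.mk0 (p : ℝ) hp0) := PresentedGroup.toGroup.of _
  -- the set defining BSlength is nonempty
  have hne : {k : ℕ | ∃ w : List (BS p), w.length = k ∧
      (∀ x ∈ w, x = BSa p ∨ x = (BSa p)⁻¹ ∨ x = BSt p ∨ x = (BSt p)⁻¹) ∧ w.prod = g}.Nonempty := by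
    refine ⟨m + j.natAbs + s, List.replicate m (BSt p)⁻¹ ++
      List.replicate j.natAbs (if 0 ≤ j then BSa p else (BSa p)⁻¹) ++
      List.replicate s (BSt p), ?_, ?_, ?_⟩
    · simp [Nat.add_assoc]
    · intro x hx
      simp only [List.mem_append, List.mem_replicate] at hx
      rcases hx with (⟨_, h⟩ | ⟨_, h⟩) | ⟨_, h⟩
      · tauto
      · split at h <;> tauto
      · tauto
    · have h1 : (BSt p)⁻¹ ^ m = BSt p ^ (-(m : ℤ)) := by
        rw [inv_pow, ← zpow_natCast, ← zpow_neg]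
      have h2 : (if 0 ≤ j then BSa p else (BSa p)⁻¹) ^ j.natAbs = BSa p ^ j := by
        by_cases hj0 : 0 ≤ j
        · simp only [hj0, if_true]
          rw [← zpow_natCast, Int.natAbs_of_nonneg hj0]
        · simp only [hj0, if_false]
          have hna : -((j.natAbs : ℤ)) = j := by omega
          rw [inv_pow, ← zpow_natCast, ← zpow_neg, hna]
      have h3 : BSt p ^ s = BSt p ^ (s : ℤ) := (zpow_natCast _ _).symm
      rw [List.prod_append, List.prod_append, List.prod_replicate, List.prod_replicate,
        List.prod_replicate, hgdef, h1, h2, h3]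
  have hmem := Nat.sInf_mem hne
  set L : ℕ := BSlength p g with hLdef
  obtain ⟨w, hwlen, hwgen, hwprod⟩ : ∃ w : List (BS p), w.length = L ∧
      (∀ x ∈ w, x = BSa p ∨ x = (BSa p)⁻¹ ∨ x = BSt p ∨ x = (BSt p)⁻¹) ∧ w.prod = g := hmem
  have hbound : |φ g 0| ≤ (p : ℝ) ^ L := by
    rw [← hwprod, ← hwlen]
    exact BS_word_bound p hp hp0 φ hφa hφt w hwgen
  -- compute φ g 0
  have hval : φ g 0 = (p : ℝ) ^ (-(m : ℤ)) * (j : ℝ) := by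
    have ht : ∀ z : ℤ, ∀ x : ℝ, (φ (BSt p) ^ z) x = (p : ℝ) ^ z * x := by
      intro z x
      rw [hφt, ← map_zpow Trep, Trep_apply, Units.val_zpow_eq_zpow_val, Units.val_mk0]
    have ha : ∀ x : ℝ, (φ (BSa p) ^ j) x = x + (j : ℝ) := by
      intro x
      rw [hφa, ← map_zpow Arep, ← ofAdd_zsmul]
      have : (j • (1:ℝ)) = (j : ℝ) := by simp
      rw [this, Arep_apply]
    rw [hgdef, map_mul, map_mul, map_zpow, map_zpow, map_zpow,
      Equiv.Perm.mul_apply, Equiv.Perm.mul_apply, ht (s:ℤ) 0, mul_zero, ha, ht, zero_add]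
  rw [hval, abs_mul, abs_of_pos (by positivity : (0:ℝ) < (p:ℝ) ^ (-(m:ℤ)))] at hbound
  -- conclude
  by_contra hcon
  push_neg at hcon
  have hLE : (L : ℝ) ≤ (E - 1) * n := hcon
  have hjb : |(j : ℝ)| ≤ (p : ℝ) ^ (L + m : ℕ) := by
    have hz : (p : ℝ) ^ (L + m : ℕ) = (p : ℝ) ^ L * (p : ℝ) ^ (m : ℕ) := by
      rw [pow_add]
    have hmul := mul_le_mul_of_nonneg_left hbound (le_of_lt (by positivity : (0:ℝ) < (p:ℝ) ^ (m:ℤ)))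
    rw [← mul_assoc] at hmul
    have : (p:ℝ) ^ (m:ℤ) * (p:ℝ) ^ (-(m:ℤ)) = 1 := by
      rw [← zpow_add₀ hp0]; simp
    rw [this, one_mul] at hmul
    rw [hz]
    calc |(j:ℝ)| ≤ (p:ℝ) ^ (m:ℤ) * (p:ℝ) ^ L := hmul
      _ = (p:ℝ) ^ L * (p:ℝ) ^ (m:ℕ) := by rw [zpow_natCast]; ring
  have hlt : (p : ℝ) ^ (L + m : ℕ) < (p : ℝ) ^ (E * (n : ℝ)) := by
    rw [← Real.rpow_natCast (p:ℝ) (L + m)]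
    rw [Real.rpow_lt_rpow_left_iff hp1]
    push_cast
    have hmn : (m : ℝ) < (n : ℝ) := by exact_mod_cast hm
    nlinarith [Nat.cast_nonneg (α := ℝ) n]
  linarith
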